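/- arXiv:2504.14424 — 3 statements merged into one kernel-verified Lean document; each statement's English description precedes it below -/
import Mathlib

section
/- Let d ≥ 1 be an integer, let ε ≥ 0 be real, and let C₁,…,C_d and α₁,…,α_d be real numbers with C_i ≥ 1 + ε and α_i ≥ 0 for every 1 ≤ i ≤ d. Then ∏_{i=1}^d (1 + ε + C_i·Exp(α_i)) ≤ (1+ε)^d + (∏_{i=1}^d C_i)·Exp(α₁ + ⋯ + α_d). -/
/-- `Exp x = e^x − 1`. -/
noncomputable def Expm (x : ℝ) : ℝ := Real.exp x - 1

lemma expm_nonneg {x : ℝ} (hx : 0 ≤ x) : 0 ≤ Expm x := by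
  simp only [Expm, sub_nonneg]
  exact Real.one_le_exp hx

lemma expm_add (a b : ℝ) : Expm (a + b) = Expm a + Expm b + Expm a * Expm b := by
  simp only [Expm, Real.exp_add]; ring

lemma key_ineq (ε c p e0 es q : ℝ) (hε : 0 ≤ ε) (hc : 1 + ε ≤ c)
    (hqp : q ≤ p) (hq : 0 ≤ q) (he0 : 0 ≤ e0) (hes : 0 ≤ es) (hp : 0 ≤ p) :
    (1 + ε + c * e0) * (q + p * es) ≤ (1 + ε) * q + c * p * (e0 + es + e0 * es) := by
  have h1 : (1 + ε) * (p * es) ≤ c * (p * es) :=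
    mul_le_mul_of_nonneg_right hc (mul_nonneg hp hes)
  have h2 : c * e0 * q ≤ c * e0 * p :=
    mul_le_mul_of_nonneg_left hqp (mul_nonneg (by linarith) he0)
  nlinarith [h1, h2]

lemma aux_prod (ε : ℝ) (hε : 0 ≤ ε) :
    ∀ (d : ℕ) (C α : Fin d → ℝ), (∀ i, 1 + ε ≤ C i) → (∀ i, 0 ≤ α i) →
    ∏ i : Fin d, (1 + ε + C i * Expm (α i)) ≤
      (1 + ε) ^ d + (∏ i : Fin d, C i) * Expm (∑ i : Fin d, α i) := by
  intro d
  induction d with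
  | zero => intro C α _ _; simp [Expm]
  | succ n ih =>
    intro C α hC hα
    rw [Fin.prod_univ_succ, Fin.prod_univ_succ, Fin.sum_univ_succ]
    have ih' := ih (fun i => C i.succ) (fun i => α i.succ)
      (fun i => hC i.succ) (fun i => hα i.succ)
    have hPge : (1 + ε) ^ n ≤ ∏ i : Fin n, C i.succ := by
      calc (1 + ε) ^ n = ∏ _i : Fin n, (1 + ε) := by
            rw [Finset.prod_const, Finset.card_univ, Fintype.card_fin]
          _ ≤ _ := Finset.prod_le_prod (fun i _ => by linarith) (fun i _ => hC i.succ)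
    have hQ : (0:ℝ) ≤ (1 + ε) ^ n := by positivity
    have hPpos : 0 ≤ ∏ i : Fin n, C i.succ := le_trans hQ hPge
    have hE0 : 0 ≤ Expm (α 0) := expm_nonneg (hα 0)
    have hES : 0 ≤ Expm (∑ i : Fin n, α i.succ) :=
      expm_nonneg (Finset.sum_nonneg fun i _ => hα i.succ)
    have hC0 : 1 + ε ≤ C 0 := hC 0
    have hfac : 0 ≤ 1 + ε + C 0 * Expm (α 0) := by nlinarith
    calc (1 + ε + C 0 * Expm (α 0)) * ∏ i : Fin n, (1 + ε + C i.succ * Expm (α i.succ))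
        ≤ (1 + ε + C 0 * Expm (α 0)) *
            ((1 + ε) ^ n + (∏ i : Fin n, C i.succ) * Expm (∑ i : Fin n, α i.succ)) :=
          mul_le_mul_of_nonneg_left ih' hfac
      _ ≤ (1 + ε) ^ (n + 1) +
            C 0 * (∏ i : Fin n, C i.succ) * Expm (α 0 + ∑ i : Fin n, α i.succ) := by
          rw [expm_add, pow_succ']
          exact key_ineq ε (C 0) _ _ _ _ hε hC0 hPge hQ hE0 hES hPpos

theorem prod_one_add_eps_add_Exp_le
    (d : ℕ) (hd : 1 ≤ d) (ε : ℝ) (hε : 0 ≤ ε)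
    (C α : Fin d → ℝ) (hC : ∀ i, 1 + ε ≤ C i) (hα : ∀ i, 0 ≤ α i) :
    ∏ i : Fin d, (1 + ε + C i * Expm (α i)) ≤
      (1 + ε) ^ d + (∏ i : Fin d, C i) * Expm (∑ i : Fin d, α i) := by
  exact aux_prod ε hε d C α hC hα
end

section
/- Let d ≥ 1 be an integer, let ε ≥ 0 and C ≥ 1 + ε be real numbers, and let α₁,…,α_d be nonnegative reals. Then ∏_{i=1}^d (1 + ε + C·Exp(α_i)) ≤ (1+ε)^d + C^d·∑_{i=1}^d Exp(2^d·α_i). -/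
private lemma lemA {ι : Type*} (s : Finset ι) (ε C : ℝ) (hε : 0 ≤ ε) (hC : 1 + ε ≤ C)
    (f : ι → ℝ) (hf : ∀ i ∈ s, 0 ≤ f i) :
    ∏ i ∈ s, (1 + ε + C * f i) ≤
      (1 + ε) ^ s.card + C ^ s.card * (∏ i ∈ s, (1 + f i) - 1) := by
  have hC0 : 0 ≤ C := by linarith
  induction s using Finset.cons_induction with
  | empty => simp
  | cons j s hj ih =>
    have hb : 0 ≤ f j := hf j (Finset.mem_cons_self _ _)
    have hf' : ∀ i ∈ s, 0 ≤ f i := fun i hi => hf i (Finset.mem_cons_of_mem hi)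
    have ih' := ih hf'
    have hQ : (1:ℝ) ≤ ∏ i ∈ s, (1 + f i) := by
      have h := Finset.prod_le_prod (s := s) (f := fun _ => (1:ℝ)) (g := fun i => 1 + f i)
        (by intro i hi; norm_num) (by intro i hi; linarith [hf' i hi])
      simpa using h
    have hP0 : (0:ℝ) ≤ ∏ i ∈ s, (1 + ε + C * f i) := by
      apply Finset.prod_nonneg
      intro i hi
      nlinarith [hf' i hi]
    have hCn : (1 + ε) ^ s.card ≤ C ^ s.card :=
      pow_le_pow_left₀ (by linarith) hC _
    have hCn0 : (0:ℝ) ≤ C ^ s.card := pow_nonneg hC0 _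
    rw [Finset.prod_cons, Finset.prod_cons, Finset.card_cons]
    set n := s.card
    set P := ∏ i ∈ s, (1 + ε + C * f i)
    set Q := ∏ i ∈ s, (1 + f i)
    have h1 : (1 + ε + C * f j) * P ≤ (1 + ε + C * f j) * ((1 + ε) ^ n + C ^ n * (Q - 1)) := by
      apply mul_le_mul_of_nonneg_left ih'
      nlinarith
    calc (1 + ε + C * f j) * P
        ≤ (1 + ε + C * f j) * ((1 + ε) ^ n + C ^ n * (Q - 1)) := h1
      _ ≤ (1 + ε) ^ (n + 1) + C ^ (n + 1) * ((1 + f j) * Q - 1) := by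
          have e1 : C * f j * (1 + ε) ^ n ≤ C * f j * C ^ n := by
            apply mul_le_mul_of_nonneg_left hCn (by positivity)
          have e2 : (1 + ε) * (C ^ n * (Q - 1)) ≤ C * (C ^ n * (Q - 1)) := by
            apply mul_le_mul_of_nonneg_right hC (by nlinarith)
          ring_nf
          nlinarith [mul_nonneg (mul_nonneg hC0 hb) (mul_nonneg hCn0 (by linarith : (0:ℝ) ≤ Q - 1))]

theorem prod_one_add_eps_add_CExp_le
    (d : ℕ) (hd : 1 ≤ d) (ε C : ℝ) (hε : 0 ≤ ε) (hC : 1 + ε ≤ C)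
    (α : Fin d → ℝ) (hα : ∀ i, 0 ≤ α i) :
    ∏ i : Fin d, (1 + ε + C * Expm (α i)) ≤
      (1 + ε) ^ d + C ^ d * ∑ i : Fin d, Expm (2 ^ d * α i) := by
  have hExpm_nonneg : ∀ x : ℝ, 0 ≤ x → 0 ≤ Expm x := by
    intro x hx
    have := Real.one_le_exp hx
    simp [Expm]; linarith
  have hA := lemA (Finset.univ : Finset (Fin d)) ε C hε hC (fun i => Expm (α i))
    (fun i _ => hExpm_nonneg _ (hα i))
  have hcard : (Finset.univ : Finset (Fin d)).card = d := Finset.card_univ.trans (Fintype.card_fin d)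
  rw [hcard] at hA
  have hprod : ∏ i : Fin d, (1 + Expm (α i)) = Real.exp (∑ i : Fin d, α i) := by
    rw [Real.exp_sum]
    apply Finset.prod_congr rfl
    intro i _
    simp [Expm]
  -- pick max
  have hne : (Finset.univ : Finset (Fin d)).Nonempty := ⟨⟨0, hd⟩, Finset.mem_univ _⟩
  obtain ⟨m, -, hm⟩ := Finset.exists_max_image Finset.univ α hne
  have hsum_le : ∑ i : Fin d, α i ≤ (d : ℝ) * α m := by
    calc ∑ i : Fin d, α i ≤ ∑ _i : Fin d, α m :=
          Finset.sum_le_sum (fun i _ => hm i (Finset.mem_univ i))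
      _ = (d : ℝ) * α m := by simp [mul_comm]
  have hd2 : (d : ℝ) ≤ (2 : ℝ) ^ d := by
    exact_mod_cast (Nat.lt_two_pow_self (n := d)).le.trans (by norm_num)
  have hsum2 : ∑ i : Fin d, α i ≤ (2 : ℝ) ^ d * α m := by
    calc ∑ i : Fin d, α i ≤ (d : ℝ) * α m := hsum_le
      _ ≤ (2 : ℝ) ^ d * α m := mul_le_mul_of_nonneg_right hd2 (hα m)
  have hB : Real.exp (∑ i : Fin d, α i) - 1 ≤ ∑ i : Fin d, Expm (2 ^ d * α i) := by
    calc Real.exp (∑ i : Fin d, α i) - 1 ≤ Real.exp ((2:ℝ) ^ d * α m) - 1 := by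
          have := Real.exp_le_exp.2 hsum2
          linarith
      _ = Expm ((2:ℝ) ^ d * α m) := rfl
      _ ≤ ∑ i : Fin d, Expm (2 ^ d * α i) := by
          apply Finset.single_le_sum (f := fun i => Expm (2 ^ d * α i)) _ (Finset.mem_univ m)
          intro i _
          exact hExpm_nonneg _ (mul_nonneg (by positivity) (hα i))
  have hCd : (0:ℝ) ≤ C ^ d := pow_nonneg (by linarith) _
  calc ∏ i : Fin d, (1 + ε + C * Expm (α i))
      ≤ (1 + ε) ^ d + C ^ d * (∏ i : Fin d, (1 + Expm (α i)) - 1) := hA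
    _ = (1 + ε) ^ d + C ^ d * (Real.exp (∑ i : Fin d, α i) - 1) := by rw [hprod]
    _ ≤ (1 + ε) ^ d + C ^ d * ∑ i : Fin d, Expm (2 ^ d * α i) := by
        have := mul_le_mul_of_nonneg_left hB hCd
        linarith
end

section
/- Let N, M, H, d, s, t ≥ 1 be integers, X = (ℤ/Nℤ)^d, and let Q₁,…,Q_s : ℤ^t → ℤ^d be maps. Then for all f, g : X → ℝ the triangle inequality ‖f+g‖_{□_{H,M}(Q₁,…,Q_s)} ≤ ‖f‖_{□_{H,M}(Q₁,…,Q_s)} + ‖g‖_{□_{H,M}(Q₁,…,Q_s)} holds; in particular ‖·‖_{□_{H,M}(Q₁,…,Q_s)} is a seminorm. -/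
open Finset

/-- The Gowers-type local box inner product at scale `M` of a family of functions
`f_ω : (ℤ/Nℤ)^d → ℝ`, `ω ∈ {0,1}^s`, with directions `u₁,…,u_s ∈ ℤ^d`. -/
noncomputable def boxInner (N d s M : ℕ) [NeZero N] (u : Fin s → Fin d → ℤ)
    (f : (Fin s → Bool) → (Fin d → ZMod N) → ℝ) : ℝ :=
  (∑ x : Fin d → ZMod N,
    ∑ y0 ∈ Fintype.piFinset (fun _ : Fin s => Finset.Icc 1 M),
      ∑ y1 ∈ Fintype.piFinset (fun _ : Fin s => Finset.Icc 1 M),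
        ∏ ω : Fin s → Bool,
          f ω fun i => x i + ∑ j : Fin s,
            (((if ω j then y1 j else y0 j : ℕ) : ZMod N) * ((u j i : ℤ) : ZMod N))) /
    ((N : ℝ) ^ d * (M : ℝ) ^ (2 * s))

/-- The local box norm `‖f‖_{□_M(u₁,…,u_s)}`. -/
noncomputable def boxNorm (N d s M : ℕ) [NeZero N] (u : Fin s → Fin d → ℤ)
    (f : (Fin d → ZMod N) → ℝ) : ℝ :=
  boxInner N d s M u (fun _ => f) ^ ((1 : ℝ) / 2 ^ s)

/-- The averaged local box norm `‖f‖_{□_{H,M}(Q₁,…,Q_s)}`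
`= (E_{h∈[H]^t} ‖f‖_{□_M(Q₁(h),…,Q_s(h))}^{2^s})^{1/2^s}`. -/
noncomputable def avgBoxNorm (N d s t M H : ℕ) [NeZero N]
    (Q : Fin s → (Fin t → ℤ) → Fin d → ℤ) (f : (Fin d → ZMod N) → ℝ) : ℝ :=
  ((∑ h ∈ Fintype.piFinset (fun _ : Fin t => Finset.Icc (1 : ℤ) (H : ℤ)),
      boxNorm N d s M (fun j => Q j h) f ^ (2 ^ s : ℕ)) / (H : ℝ) ^ t) ^ ((1 : ℝ) / 2 ^ s)

set_option linter.unusedSectionVars false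
set_option linter.unusedVariables false
set_option linter.unreachableTactic false
set_option linter.unusedTactic false
set_option maxHeartbeats 1600000

section aux
variable {N d s M : ℕ} [NeZero N]

def bpt (u : Fin s → Fin d → ℤ) (x : Fin d → ZMod N) (y0 y1 : Fin s → ℕ)
    (ω : Fin s → Bool) : Fin d → ZMod N :=
  fun i => x i + ∑ j : Fin s,
    (((if ω j then y1 j else y0 j : ℕ) : ZMod N) * ((u j i : ℤ) : ZMod N))

noncomputable def SB' (M : ℕ) (u : Fin s → Fin d → ℤ)
    (f : (Fin s → Bool) → (Fin d → ZMod N) → ℝ) : ℝ :=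
  ∑ x : Fin d → ZMod N,
    ∑ y0 ∈ Fintype.piFinset (fun _ : Fin s => Finset.Icc 1 M),
      ∑ y1 ∈ Fintype.piFinset (fun _ : Fin s => Finset.Icc 1 M),
        ∏ ω : Fin s → Bool, f ω (bpt u x y0 y1 ω)

lemma bpt_congr {u : Fin s → Fin d → ℤ} {x : Fin d → ZMod N} {y0 y1 y0' y1' : Fin s → ℕ}
    {ω ω' : Fin s → Bool}
    (h : ∀ k, (if ω k then y1 k else y0 k) = (if ω' k then y1' k else y0' k)) :
    bpt u x y0 y1 ω = bpt u x y0' y1' ω' := by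
  funext i
  unfold bpt
  congr 1
  exact Finset.sum_congr rfl fun k _ => by rw [h k]

lemma sum_update (j : Fin s) (F : (Fin s → ℕ) → ℝ) :
    ∑ y ∈ Fintype.piFinset (fun _ : Fin s => Finset.Icc 1 M),
      ∑ a ∈ Finset.Icc 1 M, F (Function.update y j a)
    = M * ∑ y ∈ Fintype.piFinset (fun _ : Fin s => Finset.Icc 1 M), F y := by
  rw [← Finset.sum_product']
  rw [Finset.mul_sum]
  have : ∀ y : Fin s → ℕ, (M : ℝ) * F y = ∑ _a ∈ Finset.Icc 1 M, F y := by
    intro y; rw [Finset.sum_const, Nat.card_Icc]; simp [nsmul_eq_mul]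
  rw [Finset.sum_congr rfl fun y _ => this y, ← Finset.sum_product']
  refine Finset.sum_nbij' (fun p => (Function.update p.1 j p.2, p.1 j))
    (fun p => (Function.update p.1 j p.2, p.1 j)) ?_ ?_ ?_ ?_ ?_
  · rintro ⟨y, a⟩ hp
    simp only [Finset.mem_product, Fintype.mem_piFinset] at hp ⊢
    refine ⟨fun k => ?_, hp.1 j⟩
    rcases eq_or_ne k j with rfl | hk
    · simpa using hp.2
    · simpa [Function.update_apply, hk] using hp.1 k
  · rintro ⟨y, a⟩ hp
    simp only [Finset.mem_product, Fintype.mem_piFinset] at hp ⊢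
    refine ⟨fun k => ?_, hp.1 j⟩
    rcases eq_or_ne k j with rfl | hk
    · simpa using hp.2
    · simpa [Function.update_apply, hk] using hp.1 k
  · rintro ⟨y, a⟩ _
    simp [Function.update_idem, Function.update_self, Function.update_eq_self]
  · rintro ⟨y, a⟩ _
    simp [Function.update_idem, Function.update_self, Function.update_eq_self]
  · rintro ⟨y, a⟩ _
    simp

noncomputable def G0 (M : ℕ) (u : Fin s → Fin d → ℤ) (j : Fin s)
    (f : (Fin s → Bool) → (Fin d → ZMod N) → ℝ)
    (x : Fin d → ZMod N) (y0 y1 : Fin s → ℕ) : ℝ :=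
  ∑ a ∈ Finset.Icc 1 M,
    ∏ ω ∈ univ.filter (fun ω : Fin s → Bool => ω j = false),
      f ω (bpt u x (Function.update y0 j a) y1 ω)

noncomputable def G1 (M : ℕ) (u : Fin s → Fin d → ℤ) (j : Fin s)
    (f : (Fin s → Bool) → (Fin d → ZMod N) → ℝ)
    (x : Fin d → ZMod N) (y0 y1 : Fin s → ℕ) : ℝ :=
  ∑ a ∈ Finset.Icc 1 M,
    ∏ ω ∈ univ.filter (fun ω : Fin s → Bool => ω j = true),
      f ω (bpt u x y0 (Function.update y1 j a) ω)

lemma SB_expand2 (u : Fin s → Fin d → ℤ) (j : Fin s)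
    (f : (Fin s → Bool) → (Fin d → ZMod N) → ℝ) :
    (M:ℝ)^2 * SB' M u f =
    ∑ x : Fin d → ZMod N,
      ∑ y0 ∈ Fintype.piFinset (fun _ : Fin s => Finset.Icc 1 M),
        ∑ y1 ∈ Fintype.piFinset (fun _ : Fin s => Finset.Icc 1 M),
          ∑ a0 ∈ Finset.Icc 1 M, ∑ a1 ∈ Finset.Icc 1 M,
            ∏ ω : Fin s → Bool,
              f ω (bpt u x (Function.update y0 j a0) (Function.update y1 j a1) ω) := by
  rw [SB', Finset.mul_sum]
  refine Finset.sum_congr rfl fun x _ => ?_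
  have step1 : (M:ℝ) * ∑ y0 ∈ Fintype.piFinset (fun _ : Fin s => Finset.Icc 1 M),
      ∑ y1 ∈ Fintype.piFinset (fun _ : Fin s => Finset.Icc 1 M),
        ∏ ω : Fin s → Bool, f ω (bpt u x y0 y1 ω)
      = ∑ y0 ∈ Fintype.piFinset (fun _ : Fin s => Finset.Icc 1 M),
          ∑ a0 ∈ Finset.Icc 1 M,
            ∑ y1 ∈ Fintype.piFinset (fun _ : Fin s => Finset.Icc 1 M),
              ∏ ω : Fin s → Bool, f ω (bpt u x (Function.update y0 j a0) y1 ω) :=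
    (sum_update j fun y0 => ∑ y1 ∈ Fintype.piFinset (fun _ : Fin s => Finset.Icc 1 M),
      ∏ ω : Fin s → Bool, f ω (bpt u x y0 y1 ω)).symm
  have step2 : ∀ y0 a0, (M:ℝ) * ∑ y1 ∈ Fintype.piFinset (fun _ : Fin s => Finset.Icc 1 M),
        ∏ ω : Fin s → Bool, f ω (bpt u x (Function.update y0 j a0) y1 ω)
      = ∑ y1 ∈ Fintype.piFinset (fun _ : Fin s => Finset.Icc 1 M),
          ∑ a1 ∈ Finset.Icc 1 M,
            ∏ ω : Fin s → Bool,
              f ω (bpt u x (Function.update y0 j a0) (Function.update y1 j a1) ω) :=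
    fun y0 a0 => (sum_update j fun y1 =>
      ∏ ω : Fin s → Bool, f ω (bpt u x (Function.update y0 j a0) y1 ω)).symm
  calc (M:ℝ)^2 * (∑ y0 ∈ Fintype.piFinset (fun _ : Fin s => Finset.Icc 1 M),
      ∑ y1 ∈ Fintype.piFinset (fun _ : Fin s => Finset.Icc 1 M),
        ∏ ω : Fin s → Bool, f ω (bpt u x y0 y1 ω))
      = (M:ℝ) * ((M:ℝ) * ∑ y0 ∈ Fintype.piFinset (fun _ : Fin s => Finset.Icc 1 M),
          ∑ y1 ∈ Fintype.piFinset (fun _ : Fin s => Finset.Icc 1 M),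
            ∏ ω : Fin s → Bool, f ω (bpt u x y0 y1 ω)) := by ring
    _ = ∑ y0 ∈ Fintype.piFinset (fun _ : Fin s => Finset.Icc 1 M),
          ∑ a0 ∈ Finset.Icc 1 M,
            (M:ℝ) * ∑ y1 ∈ Fintype.piFinset (fun _ : Fin s => Finset.Icc 1 M),
              ∏ ω : Fin s → Bool, f ω (bpt u x (Function.update y0 j a0) y1 ω) := by
        rw [step1, Finset.mul_sum]
        exact Finset.sum_congr rfl fun y0 _ => Finset.mul_sum _ _ _
    _ = ∑ y0 ∈ Fintype.piFinset (fun _ : Fin s => Finset.Icc 1 M),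
          ∑ a0 ∈ Finset.Icc 1 M,
            ∑ y1 ∈ Fintype.piFinset (fun _ : Fin s => Finset.Icc 1 M),
              ∑ a1 ∈ Finset.Icc 1 M,
                ∏ ω : Fin s → Bool,
                  f ω (bpt u x (Function.update y0 j a0) (Function.update y1 j a1) ω) :=
        Finset.sum_congr rfl fun y0 _ => Finset.sum_congr rfl fun a0 _ => step2 y0 a0
    _ = ∑ y0 ∈ Fintype.piFinset (fun _ : Fin s => Finset.Icc 1 M),
          ∑ y1 ∈ Fintype.piFinset (fun _ : Fin s => Finset.Icc 1 M),
            ∑ a0 ∈ Finset.Icc 1 M, ∑ a1 ∈ Finset.Icc 1 M,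
              ∏ ω : Fin s → Bool,
                f ω (bpt u x (Function.update y0 j a0) (Function.update y1 j a1) ω) :=
        Finset.sum_congr rfl fun y0 _ => Finset.sum_comm

lemma filter_true_eq (j : Fin s) :
    (univ.filter fun ω : Fin s → Bool => ¬(ω j = false))
      = univ.filter (fun ω : Fin s → Bool => ω j = true) := by
  ext ω; simp

lemma claimA (u : Fin s → Fin d → ℤ) (j : Fin s)
    (f : (Fin s → Bool) → (Fin d → ZMod N) → ℝ) :
    (M:ℝ)^2 * SB' M u f =
    ∑ x : Fin d → ZMod N,
      ∑ y0 ∈ Fintype.piFinset (fun _ : Fin s => Finset.Icc 1 M),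
        ∑ y1 ∈ Fintype.piFinset (fun _ : Fin s => Finset.Icc 1 M),
          G0 M u j f x y0 y1 * G1 M u j f x y0 y1 := by
  rw [SB_expand2 u j f]
  refine Finset.sum_congr rfl fun x _ => Finset.sum_congr rfl fun y0 _ =>
    Finset.sum_congr rfl fun y1 _ => ?_
  rw [G0, G1, Finset.sum_mul_sum]
  refine Finset.sum_congr rfl fun a0 _ => Finset.sum_congr rfl fun a1 _ => ?_
  rw [← Finset.prod_filter_mul_prod_filter_not univ (fun ω : Fin s → Bool => ω j = false)]
  congr 1
  · refine Finset.prod_congr rfl fun ω hω => ?_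
    have hj : ω j = false := (mem_filter.mp hω).2
    congr 1
    refine bpt_congr fun k => ?_
    rcases eq_or_ne k j with rfl | hk
    · simp [hj]
    · simp [Function.update_apply, hk]
  · rw [filter_true_eq j]
    refine Finset.prod_congr rfl fun ω hω => ?_
    have hj : ω j = true := (mem_filter.mp hω).2
    congr 1
    refine bpt_congr fun k => ?_
    rcases eq_or_ne k j with rfl | hk
    · simp [hj]
    · simp [Function.update_apply, hk]

lemma claimB0 (u : Fin s → Fin d → ℤ) (j : Fin s)
    (f : (Fin s → Bool) → (Fin d → ZMod N) → ℝ) :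
    (M:ℝ)^2 * SB' M u (fun ω => f (Function.update ω j false)) =
    ∑ x : Fin d → ZMod N,
      ∑ y0 ∈ Fintype.piFinset (fun _ : Fin s => Finset.Icc 1 M),
        ∑ y1 ∈ Fintype.piFinset (fun _ : Fin s => Finset.Icc 1 M),
          (G0 M u j f x y0 y1)^2 := by
  rw [SB_expand2 u j _]
  refine Finset.sum_congr rfl fun x _ => Finset.sum_congr rfl fun y0 _ =>
    Finset.sum_congr rfl fun y1 _ => ?_
  rw [G0, sq, Finset.sum_mul_sum]
  refine Finset.sum_congr rfl fun a0 _ => Finset.sum_congr rfl fun a1 _ => ?_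
  rw [← Finset.prod_filter_mul_prod_filter_not univ (fun ω : Fin s → Bool => ω j = false)]
  congr 1
  · refine Finset.prod_congr rfl fun ω hω => ?_
    have hj : ω j = false := (mem_filter.mp hω).2
    have h1 : Function.update ω j false = ω := by
      rw [← hj]; exact Function.update_eq_self j ω
    show f (Function.update ω j false) _ = f ω _
    rw [h1]
    congr 1
    refine bpt_congr fun k => ?_
    rcases eq_or_ne k j with rfl | hk
    · simp [hj]
    · simp [Function.update_apply, hk]
  · refine Finset.prod_nbij' (fun ω => Function.update ω j false)
      (fun ω => Function.update ω j true) ?_ ?_ ?_ ?_ ?_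
    · intro ω hω
      simp [Finset.mem_filter]
    · intro ω hω
      simp [Finset.mem_filter]
    · intro ω hω
      have hj : ω j = true := by
        have := (mem_filter.mp hω).2
        simpa using this
      show Function.update (Function.update ω j _) j _ = ω
      rw [Function.update_idem, ← hj]
      exact Function.update_eq_self j ω
    · intro ω hω
      have hj : ω j = false := (mem_filter.mp hω).2
      show Function.update (Function.update ω j _) j _ = ω
      rw [Function.update_idem, ← hj]
      exact Function.update_eq_self j ω
    · intro ω hω
      have hj : ω j = true := by
        have := (mem_filter.mp hω).2
        simpa using this
      show f (Function.update ω j false) _ = f (Function.update ω j false) _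
      congr 1
      refine bpt_congr fun k => ?_
      rcases eq_or_ne k j with rfl | hk
      · simp [hj]
      · simp [Function.update_apply, hk]

lemma claimB1 (u : Fin s → Fin d → ℤ) (j : Fin s)
    (f : (Fin s → Bool) → (Fin d → ZMod N) → ℝ) :
    (M:ℝ)^2 * SB' M u (fun ω => f (Function.update ω j true)) =
    ∑ x : Fin d → ZMod N,
      ∑ y0 ∈ Fintype.piFinset (fun _ : Fin s => Finset.Icc 1 M),
        ∑ y1 ∈ Fintype.piFinset (fun _ : Fin s => Finset.Icc 1 M),
          (G1 M u j f x y0 y1)^2 := by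
  rw [SB_expand2 u j _]
  refine Finset.sum_congr rfl fun x _ => Finset.sum_congr rfl fun y0 _ =>
    Finset.sum_congr rfl fun y1 _ => ?_
  rw [G1, sq, Finset.sum_mul_sum]
  refine Finset.sum_congr rfl fun a0 _ => Finset.sum_congr rfl fun a1 _ => ?_
  rw [← Finset.prod_filter_mul_prod_filter_not univ (fun ω : Fin s → Bool => ω j = true),
    mul_comm]
  congr 1
  · refine Finset.prod_nbij' (fun ω => Function.update ω j true)
      (fun ω => Function.update ω j false) ?_ ?_ ?_ ?_ ?_
    · intro ω hω
      simp [Finset.mem_filter]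
    · intro ω hω
      simp [Finset.mem_filter]
    · intro ω hω
      have hj : ω j = false := by
        have := (mem_filter.mp hω).2
        simpa using this
      show Function.update (Function.update ω j _) j _ = ω
      rw [Function.update_idem, ← hj]
      exact Function.update_eq_self j ω
    · intro ω hω
      have hj : ω j = true := (mem_filter.mp hω).2
      show Function.update (Function.update ω j _) j _ = ω
      rw [Function.update_idem, ← hj]
      exact Function.update_eq_self j ω
    · intro ω hω
      have hj : ω j = false := by
        have := (mem_filter.mp hω).2
        simpa using this
      show f (Function.update ω j true) _ = f (Function.update ω j true) _
      congr 1
      refine bpt_congr fun k => ?_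
      rcases eq_or_ne k j with rfl | hk
      · simp [hj]
      · simp [Function.update_apply, hk]
  · refine Finset.prod_congr rfl fun ω hω => ?_
    have hj : ω j = true := (mem_filter.mp hω).2
    have h1 : Function.update ω j true = ω := by
      rw [← hj]; exact Function.update_eq_self j ω
    show f (Function.update ω j true) _ = f ω _
    rw [h1]
    congr 1
    refine bpt_congr fun k => ?_
    rcases eq_or_ne k j with rfl | hk
    · simp [hj]
    · simp [Function.update_apply, hk]

lemma flat3 (P : Finset (Fin s → ℕ)) (φ : (Fin d → ZMod N) → (Fin s → ℕ) → (Fin s → ℕ) → ℝ) :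
    (∑ x : Fin d → ZMod N, ∑ y0 ∈ P, ∑ y1 ∈ P, φ x y0 y1)
    = ∑ z ∈ (univ : Finset (Fin d → ZMod N)) ×ˢ (P ×ˢ P), φ z.1 z.2.1 z.2.2 := by
  rw [Finset.sum_product]
  refine Finset.sum_congr rfl fun x _ => ?_
  rw [Finset.sum_product]

lemma Mpos (hM : 1 ≤ M) : (0:ℝ) < (M:ℝ)^2 := by
  have : (0:ℝ) < (M:ℝ) := by exact_mod_cast Nat.lt_of_lt_of_le Nat.zero_lt_one hM
  positivity

lemma SB_sq_le (hM : 1 ≤ M) (u : Fin s → Fin d → ℤ) (j : Fin s)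
    (f : (Fin s → Bool) → (Fin d → ZMod N) → ℝ) :
    (SB' M u f)^2 ≤ SB' M u (fun ω => f (Function.update ω j false))
      * SB' M u (fun ω => f (Function.update ω j true)) := by
  have hMpos := Mpos (M:=M) hM
  set P := Fintype.piFinset (fun _ : Fin s => Finset.Icc 1 M) with hP
  set T := (univ : Finset (Fin d → ZMod N)) ×ˢ (P ×ˢ P) with hT
  have hA : (M:ℝ)^2 * SB' M u f = ∑ z ∈ T, G0 M u j f z.1 z.2.1 z.2.2 * G1 M u j f z.1 z.2.1 z.2.2 :=
    (claimA u j f).trans (flat3 P _)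
  have hB0 : (M:ℝ)^2 * SB' M u (fun ω => f (Function.update ω j false))
      = ∑ z ∈ T, (G0 M u j f z.1 z.2.1 z.2.2)^2 :=
    (claimB0 u j f).trans (flat3 P _)
  have hB1 : (M:ℝ)^2 * SB' M u (fun ω => f (Function.update ω j true))
      = ∑ z ∈ T, (G1 M u j f z.1 z.2.1 z.2.2)^2 :=
    (claimB1 u j f).trans (flat3 P _)
  have key := Finset.sum_mul_sq_le_sq_mul_sq T
    (fun z => G0 M u j f z.1 z.2.1 z.2.2) (fun z => G1 M u j f z.1 z.2.1 z.2.2)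
  have h2 : ((M:ℝ)^2)^2 * (SB' M u f)^2
      ≤ ((M:ℝ)^2)^2 * (SB' M u (fun ω => f (Function.update ω j false))
        * SB' M u (fun ω => f (Function.update ω j true))) := by
    calc ((M:ℝ)^2)^2 * (SB' M u f)^2 = ((M:ℝ)^2 * SB' M u f)^2 := by ring
      _ ≤ (∑ z ∈ T, (G0 M u j f z.1 z.2.1 z.2.2)^2)
          * ∑ z ∈ T, (G1 M u j f z.1 z.2.1 z.2.2)^2 := by rw [hA]; exact key
      _ = _ := by rw [← hB0, ← hB1]; ring
  exact le_of_mul_le_mul_left h2 (pow_pos hMpos 2)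

lemma SB_update_false_nonneg (hM : 1 ≤ M) (u : Fin s → Fin d → ℤ) (j : Fin s)
    (f : (Fin s → Bool) → (Fin d → ZMod N) → ℝ) :
    0 ≤ SB' M u (fun ω => f (Function.update ω j false)) := by
  have hMpos := Mpos (M:=M) hM
  have h := claimB0 (M := M) u j f
  have h0 : 0 ≤ (M:ℝ)^2 * SB' M u (fun ω => f (Function.update ω j false)) := by
    rw [h]
    refine Finset.sum_nonneg fun x _ => Finset.sum_nonneg fun y0 _ =>
      Finset.sum_nonneg fun y1 _ => sq_nonneg _
  nlinarith [h0, hMpos]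

def mix {s : ℕ} (J : Finset (Fin s)) (η ω : Fin s → Bool) : Fin s → Bool :=
  fun i => if i ∈ J then η i else ω i

lemma SB_mix_nonneg (hM : 1 ≤ M) (u : Fin s → Fin d → ℤ) {J : Finset (Fin s)}
    (hJ : J.Nonempty) (f : (Fin s → Bool) → (Fin d → ZMod N) → ℝ) (η : Fin s → Bool) :
    0 ≤ SB' M u (fun ω => f (mix J η ω)) := by
  obtain ⟨j, hj⟩ := hJ
  have hfun : (fun ω => f (mix J η ω))
      = (fun ω => (fun ω' => f (mix J η ω')) (Function.update ω j false)) := by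
    funext ω
    show f (mix J η ω) = f (mix J η (Function.update ω j false))
    have hm : mix J η (Function.update ω j false) = mix J η ω := by
      funext i
      by_cases hiJ : i ∈ J
      · simp [mix, hiJ]
      · have hij : i ≠ j := fun h => hiJ (h ▸ hj)
        simp [mix, hiJ, Function.update_apply, hij]
    rw [hm]
  rw [hfun]
  exact SB_update_false_nonneg hM u j (fun ω' => f (mix J η ω'))

lemma two_pow_s (hs : 1 ≤ s) : 2^s = 2 * 2^(s-1) := by
  conv_lhs => rw [show s = (s-1)+1 by omega]
  rw [pow_succ]
  ring

lemma card_coord (j : Fin s) (b : Bool) :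
    (univ.filter (fun η : Fin s → Bool => η j = b)).card = 2^(s-1) := by
  have hs1 : 1 ≤ s := j.pos
  have hbij : (univ.filter (fun η : Fin s → Bool => η j = b)).card
      = (univ.filter (fun η : Fin s → Bool => ¬(η j = b))).card := by
    refine Finset.card_nbij' (fun η => Function.update η j (!b))
      (fun η => Function.update η j b) ?_ ?_ ?_ ?_
    · intro η hη; simp
    · intro η hη; simp
    · intro η hη
      have hb : η j = b := by simpa using (mem_filter.mp hη).2
      show Function.update (Function.update η j _) j _ = η
      rw [Function.update_idem, ← hb]
      exact Function.update_eq_self j η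
    · intro η hη
      have hb : η j = !b := by
        have := (mem_filter.mp hη).2
        cases hc : η j <;> cases b <;> simp_all
      show Function.update (Function.update η j _) j _ = η
      rw [Function.update_idem, ← hb]
      exact Function.update_eq_self j η
  have hsum : (univ.filter (fun η : Fin s → Bool => η j = b)).card
      + (univ.filter (fun η : Fin s → Bool => ¬(η j = b))).card
      = (univ : Finset (Fin s → Bool)).card :=
    Finset.card_filter_add_card_filter_not _
  have hcard : (univ : Finset (Fin s → Bool)).card = 2^s := by
    simp [Finset.card_univ]
  have h2 := two_pow_s hs1
  rw [hcard, h2, ← hbij] at hsum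
  exact Nat.eq_of_mul_eq_mul_left (by norm_num : (0:ℕ) < 2) (by rw [two_mul]; exact hsum)

lemma prod_update_split (j : Fin s) (b : Bool) (g : (Fin s → Bool) → ℝ) :
    ∏ η : Fin s → Bool, g (Function.update η j b)
      = (∏ η ∈ univ.filter (fun η : Fin s → Bool => η j = b), g η)^2 := by
  rw [← Finset.prod_filter_mul_prod_filter_not univ (fun η : Fin s → Bool => η j = b), sq]
  congr 1
  · refine Finset.prod_congr rfl fun η hη => ?_
    have hb : η j = b := (mem_filter.mp hη).2
    rw [show Function.update η j b = η from by rw [← hb]; exact Function.update_eq_self j η]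
  · refine Finset.prod_nbij' (fun η => Function.update η j b)
      (fun η => Function.update η j (!b)) ?_ ?_ ?_ ?_ ?_
    · intro η hη; simp
    · intro η hη; simp
    · intro η hη
      have hb : η j = !b := by
        have := (mem_filter.mp hη).2
        cases hc : η j <;> cases b <;> simp_all
      show Function.update (Function.update η j _) j _ = η
      rw [Function.update_idem, ← hb]
      exact Function.update_eq_self j η
    · intro η hη
      have hb : η j = b := (mem_filter.mp hη).2
      show Function.update (Function.update η j _) j _ = η
      rw [Function.update_idem, ← hb]
      exact Function.update_eq_self j η
    · intro η hη; rfl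

lemma filter_neg_coord (j : Fin s) (b : Bool) :
    (univ.filter fun η : Fin s → Bool => ¬(η j = b))
      = univ.filter (fun η : Fin s → Bool => η j = !b) := by
  ext η; cases hc : η j <;> cases b <;> simp_all

lemma gcs_single (hM : 1 ≤ M) (u : Fin s → Fin d → ℤ) (j : Fin s)
    (f : (Fin s → Bool) → (Fin d → ZMod N) → ℝ) :
    (SB' M u f)^(2^s) ≤ ∏ η : Fin s → Bool, SB' M u (fun ω => f (mix {j} η ω)) := by
  have hs1 : 1 ≤ s := j.pos
  have hmix : ∀ η : Fin s → Bool,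
      (fun ω => f (mix {j} η ω)) = fun ω => f (Function.update ω j (η j)) := by
    intro η; funext ω
    have hm : mix {j} η ω = Function.update ω j (η j) := by
      funext i
      rcases eq_or_ne i j with rfl | hij
      · simp [mix]
      · simp [mix, hij, Function.update_apply]
    rw [hm]
  have hsplit : ∏ η : Fin s → Bool, SB' M u (fun ω => f (mix {j} η ω))
      = (SB' M u (fun ω => f (Function.update ω j false)))^(2^(s-1))
        * (SB' M u (fun ω => f (Function.update ω j true)))^(2^(s-1)) := by
    calc ∏ η : Fin s → Bool, SB' M u (fun ω => f (mix {j} η ω))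
        = ∏ η : Fin s → Bool, SB' M u (fun ω => f (Function.update ω j (η j))) :=
          Finset.prod_congr rfl fun η _ => by rw [hmix η]
      _ = _ := by
          rw [← Finset.prod_filter_mul_prod_filter_not univ
            (fun η : Fin s → Bool => η j = false), filter_neg_coord]
          congr 1
          · rw [Finset.prod_congr rfl (fun η hη => ?_), Finset.prod_const, card_coord]
            rw [(mem_filter.mp hη).2]
          · rw [Finset.prod_congr rfl (fun η hη => ?_), Finset.prod_const, card_coord]
            rw [show η j = true by simpa using (mem_filter.mp hη).2]
  rw [hsplit]
  calc (SB' M u f)^(2^s) = ((SB' M u f)^2)^(2^(s-1)) := by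
        rw [← pow_mul, ← two_pow_s hs1]
    _ ≤ (SB' M u (fun ω => f (Function.update ω j false))
          * SB' M u (fun ω => f (Function.update ω j true)))^(2^(s-1)) :=
        pow_le_pow_left₀ (sq_nonneg _) (SB_sq_le hM u j f) _
    _ = _ := mul_pow _ _ _

lemma SB_gcs (hM : 1 ≤ M) (u : Fin s → Fin d → ℤ)
    (f : (Fin s → Bool) → (Fin d → ZMod N) → ℝ)
    (J : Finset (Fin s)) (hJ : J.Nonempty) :
    (SB' M u f)^(2^s) ≤ ∏ η : Fin s → Bool, SB' M u (fun ω => f (mix J η ω)) := by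
  induction hJ using Finset.Nonempty.cons_induction with
  | singleton j => exact gcs_single hM u j f
  | cons j J hjJ hJne ih =>
    have hBnn : ∀ η : Fin s → Bool, 0 ≤ SB' M u (fun ω => f (mix (cons j J hjJ) η ω)) :=
      fun η => SB_mix_nonneg hM u ⟨j, mem_cons_self j J⟩ f η
    have hAnn : ∀ η : Fin s → Bool, 0 ≤ SB' M u (fun ω => f (mix J η ω)) :=
      fun η => SB_mix_nonneg hM u hJne f η
    have hfun : ∀ (η : Fin s → Bool) (b : Bool),
        (fun ω => f (mix J η (Function.update ω j b)))
        = (fun ω => f (mix (cons j J hjJ) (Function.update η j b) ω)) := by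
      intro η b; funext ω
      have hm : mix J η (Function.update ω j b) = mix (cons j J hjJ) (Function.update η j b) ω := by
        funext i
        rcases eq_or_ne i j with rfl | hij
        · simp [mix, hjJ]
        · by_cases hiJ : i ∈ J
          · simp [mix, hiJ, Function.update_apply, hij, Finset.mem_cons]
          · simp [mix, hiJ, Function.update_apply, hij, Finset.mem_cons]
      rw [hm]
    have hCS : ∀ η : Fin s → Bool, (SB' M u (fun ω => f (mix J η ω)))^2
        ≤ SB' M u (fun ω => f (mix (cons j J hjJ) (Function.update η j false) ω))
          * SB' M u (fun ω => f (mix (cons j J hjJ) (Function.update η j true) ω)) := by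
      intro η
      have h := SB_sq_le hM u j (fun ω => f (mix J η ω))
      rw [show (fun ω => f (mix J η (Function.update ω j false)))
          = (fun ω => f (mix (cons j J hjJ) (Function.update η j false) ω)) from hfun η false,
        show (fun ω => f (mix J η (Function.update ω j true)))
          = (fun ω => f (mix (cons j J hjJ) (Function.update η j true) ω)) from hfun η true] at h
      exact h
    refine ih.trans ?_
    calc ∏ η : Fin s → Bool, SB' M u (fun ω => f (mix J η ω))
        ≤ ∏ η : Fin s → Bool,
            (Real.sqrt (SB' M u (fun ω => f (mix (cons j J hjJ) (Function.update η j false) ω)))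
             * Real.sqrt (SB' M u (fun ω => f (mix (cons j J hjJ) (Function.update η j true) ω)))) := by
          refine Finset.prod_le_prod (fun η _ => hAnn η) (fun η _ => ?_)
          calc SB' M u (fun ω => f (mix J η ω))
              = Real.sqrt ((SB' M u (fun ω => f (mix J η ω)))^2) :=
                (Real.sqrt_sq (hAnn η)).symm
            _ ≤ Real.sqrt (SB' M u (fun ω => f (mix (cons j J hjJ) (Function.update η j false) ω))
                  * SB' M u (fun ω => f (mix (cons j J hjJ) (Function.update η j true) ω))) :=
                Real.sqrt_le_sqrt (hCS η)
            _ = _ := Real.sqrt_mul (hBnn _) _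
      _ = ∏ η : Fin s → Bool, SB' M u (fun ω => f (mix (cons j J hjJ) η ω)) := by
          rw [Finset.prod_mul_distrib,
            prod_update_split j false
              (fun η => Real.sqrt (SB' M u (fun ω => f (mix (cons j J hjJ) η ω)))),
            prod_update_split j true
              (fun η => Real.sqrt (SB' M u (fun ω => f (mix (cons j J hjJ) η ω))))]
          rw [← Finset.prod_pow, ← Finset.prod_pow]
          rw [Finset.prod_congr rfl (fun η _ => Real.sq_sqrt (hBnn η)),
            Finset.prod_congr rfl (fun η _ => Real.sq_sqrt (hBnn η))]
          have hft : (univ.filter fun η : Fin s → Bool => η j = true)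
              = univ.filter (fun η : Fin s → Bool => ¬(η j = false)) := by
            ext η; cases hc : η j <;> simp_all
          rw [hft]
          exact Finset.prod_filter_mul_prod_filter_not univ _ _

lemma SB_gcs_univ (hM : 1 ≤ M) (hs : 1 ≤ s) (u : Fin s → Fin d → ℤ)
    (f : (Fin s → Bool) → (Fin d → ZMod N) → ℝ) :
    (SB' M u f)^(2^s) ≤ ∏ η : Fin s → Bool, SB' M u (fun _ => f η) := by
  have h := SB_gcs hM u f univ ⟨⟨0, hs⟩, mem_univ _⟩
  refine h.trans (le_of_eq (Finset.prod_congr rfl fun η _ => ?_))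
  have hm : ∀ ω : Fin s → Bool, mix univ η ω = η := by
    intro ω; funext i; simp [mix]
  have : (fun ω => f (mix univ η ω)) = (fun _ => f η) := by
    funext ω; rw [hm ω]
  rw [this]

lemma SB_diag_nonneg (hM : 1 ≤ M) (hs : 1 ≤ s) (u : Fin s → Fin d → ℤ)
    (f : (Fin d → ZMod N) → ℝ) : 0 ≤ SB' M u (fun _ => f) :=
  SB_update_false_nonneg hM u ⟨0, hs⟩ (fun _ => f)

lemma filter_mem_univ_eq (T : Finset (Fin s → Bool)) :
    (univ.filter fun ω : Fin s → Bool => ω ∈ T) = T := by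
  ext ω; simp

lemma filter_not_mem_univ_eq (T : Finset (Fin s → Bool)) :
    (univ.filter fun ω : Fin s → Bool => ¬(ω ∈ T)) = univ \ T := by
  ext ω; simp

lemma SB_expand (u : Fin s → Fin d → ℤ) (f g : (Fin d → ZMod N) → ℝ) :
    SB' M u (fun _ => f + g) = ∑ T ∈ (univ : Finset (Fin s → Bool)).powerset,
      SB' M u (fun ω => if ω ∈ T then f else g) := by
  have inner : ∀ (x : Fin d → ZMod N) (y0 y1 : Fin s → ℕ),
      ∏ ω : Fin s → Bool, (f + g) (bpt u x y0 y1 ω)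
      = ∑ T ∈ (univ : Finset (Fin s → Bool)).powerset,
          ∏ ω : Fin s → Bool, (if ω ∈ T then f else g) (bpt u x y0 y1 ω) := by
    intro x y0 y1
    calc ∏ ω : Fin s → Bool, (f + g) (bpt u x y0 y1 ω)
        = ∏ ω : Fin s → Bool, (f (bpt u x y0 y1 ω) + g (bpt u x y0 y1 ω)) := rfl
      _ = ∑ T ∈ (univ : Finset (Fin s → Bool)).powerset,
            (∏ ω ∈ T, f (bpt u x y0 y1 ω)) * ∏ ω ∈ univ \ T, g (bpt u x y0 y1 ω) :=
          Finset.prod_add _ _ _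
      _ = ∑ T ∈ (univ : Finset (Fin s → Bool)).powerset,
            ∏ ω : Fin s → Bool, (if ω ∈ T then f else g) (bpt u x y0 y1 ω) := by
          refine Finset.sum_congr rfl fun T hT => ?_
          rw [← Finset.prod_filter_mul_prod_filter_not univ (fun ω : Fin s → Bool => ω ∈ T)]
          congr 1
          · rw [filter_mem_univ_eq T]
            exact Finset.prod_congr rfl fun ω hω => by rw [if_pos hω]
          · rw [filter_not_mem_univ_eq T]
            exact Finset.prod_congr rfl fun ω hω => by
              rw [if_neg (Finset.mem_sdiff.mp hω).2]
  calc SB' M u (fun _ => f + g)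
      = ∑ x : Fin d → ZMod N,
          ∑ y0 ∈ Fintype.piFinset (fun _ : Fin s => Finset.Icc 1 M),
            ∑ y1 ∈ Fintype.piFinset (fun _ : Fin s => Finset.Icc 1 M),
              ∑ T ∈ (univ : Finset (Fin s → Bool)).powerset,
                ∏ ω : Fin s → Bool, (if ω ∈ T then f else g) (bpt u x y0 y1 ω) := by
        rw [SB']
        exact Finset.sum_congr rfl fun x _ => Finset.sum_congr rfl fun y0 _ =>
          Finset.sum_congr rfl fun y1 _ => inner x y0 y1
    _ = ∑ x : Fin d → ZMod N,
          ∑ y0 ∈ Fintype.piFinset (fun _ : Fin s => Finset.Icc 1 M),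
            ∑ T ∈ (univ : Finset (Fin s → Bool)).powerset,
              ∑ y1 ∈ Fintype.piFinset (fun _ : Fin s => Finset.Icc 1 M),
                ∏ ω : Fin s → Bool, (if ω ∈ T then f else g) (bpt u x y0 y1 ω) :=
        Finset.sum_congr rfl fun x _ => Finset.sum_congr rfl fun y0 _ => Finset.sum_comm
    _ = ∑ x : Fin d → ZMod N,
          ∑ T ∈ (univ : Finset (Fin s → Bool)).powerset,
            ∑ y0 ∈ Fintype.piFinset (fun _ : Fin s => Finset.Icc 1 M),
              ∑ y1 ∈ Fintype.piFinset (fun _ : Fin s => Finset.Icc 1 M),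
                ∏ ω : Fin s → Bool, (if ω ∈ T then f else g) (bpt u x y0 y1 ω) :=
        Finset.sum_congr rfl fun x _ => Finset.sum_comm
    _ = ∑ T ∈ (univ : Finset (Fin s → Bool)).powerset,
          ∑ x : Fin d → ZMod N,
            ∑ y0 ∈ Fintype.piFinset (fun _ : Fin s => Finset.Icc 1 M),
              ∑ y1 ∈ Fintype.piFinset (fun _ : Fin s => Finset.Icc 1 M),
                ∏ ω : Fin s → Bool, (if ω ∈ T then f else g) (bpt u x y0 y1 ω) :=
        Finset.sum_comm
    _ = _ := rfl

lemma card_univ_bool : (univ : Finset (Fin s → Bool)).card = 2^s := by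
  simp [Finset.card_univ]

lemma SB_add_le (hM : 1 ≤ M) (hs : 1 ≤ s) (u : Fin s → Fin d → ℤ)
    (f g : (Fin d → ZMod N) → ℝ) :
    SB' M u (fun _ => f + g)
      ≤ ((SB' M u (fun _ => f)) ^ ((1:ℝ)/2^s) + (SB' M u (fun _ => g)) ^ ((1:ℝ)/2^s)) ^ (2^s : ℕ) := by
  set A := SB' M u (fun _ => f) with hAdef
  set B := SB' M u (fun _ => g) with hBdef
  have hA : 0 ≤ A := SB_diag_nonneg hM hs u f
  have hB : 0 ≤ B := SB_diag_nonneg hM hs u g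
  set e : ℝ := (1:ℝ)/2^s with hedef
  set n : ℕ := 2^s with hndef
  have hne : (n:ℝ) = (2:ℝ)^s := by push_cast [hndef]; ring
  have hen : e * (n:ℝ) = 1 := by
    rw [hedef, hne]
    field_simp
  have hαn : (A ^ e) ^ (n:ℕ) = A := by
    rw [← Real.rpow_natCast (A ^ e) n, ← Real.rpow_mul hA, hen, Real.rpow_one]
  have hβn : (B ^ e) ^ (n:ℕ) = B := by
    rw [← Real.rpow_natCast (B ^ e) n, ← Real.rpow_mul hB, hen, Real.rpow_one]
  have hα : 0 ≤ A ^ e := Real.rpow_nonneg hA e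
  have hβ : 0 ≤ B ^ e := Real.rpow_nonneg hB e
  rw [SB_expand]
  have hperT : ∀ T ∈ (univ : Finset (Fin s → Bool)).powerset,
      SB' M u (fun ω => if ω ∈ T then f else g)
        ≤ (A ^ e) ^ T.card * (B ^ e) ^ (univ \ T).card := by
    intro T _
    have h1 := SB_gcs_univ hM hs u (fun ω => if ω ∈ T then f else g)
    have h2 : ∏ η : Fin s → Bool, SB' M u (fun _ => if η ∈ T then f else g)
        = A ^ T.card * B ^ (univ \ T).card := by
      rw [← Finset.prod_filter_mul_prod_filter_not univ (fun η : Fin s → Bool => η ∈ T)]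
      congr 1
      · rw [filter_mem_univ_eq T,
          Finset.prod_congr rfl (fun η hη => by rw [if_pos hη] : ∀ η ∈ T,
            SB' M u (fun _ => if η ∈ T then f else g) = A),
          Finset.prod_const]
      · rw [filter_not_mem_univ_eq T,
          Finset.prod_congr rfl (fun η hη => by rw [if_neg (Finset.mem_sdiff.mp hη).2] : ∀ η ∈ univ \ T,
            SB' M u (fun _ => if η ∈ T then f else g) = B),
          Finset.prod_const]
    have hn0 : n ≠ 0 := by simp [hndef]
    refine le_of_pow_le_pow_left₀ hn0 (mul_nonneg (pow_nonneg hα _) (pow_nonneg hβ _)) ?_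
    calc (SB' M u (fun ω => if ω ∈ T then f else g))^n
        ≤ ∏ η : Fin s → Bool, SB' M u (fun _ => if η ∈ T then f else g) := h1
      _ = A ^ T.card * B ^ (univ \ T).card := h2
      _ = ((A ^ e) ^ T.card * (B ^ e) ^ (univ \ T).card)^n := by
          rw [mul_pow, ← pow_mul, ← pow_mul, mul_comm T.card n, mul_comm (univ \ T).card n,
            pow_mul, pow_mul, hαn, hβn]
  calc ∑ T ∈ (univ : Finset (Fin s → Bool)).powerset, SB' M u (fun ω => if ω ∈ T then f else g)
      ≤ ∑ T ∈ (univ : Finset (Fin s → Bool)).powerset,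
          (A ^ e) ^ T.card * (B ^ e) ^ (univ \ T).card := Finset.sum_le_sum hperT
    _ = ∑ T ∈ (univ : Finset (Fin s → Bool)).powerset,
          (∏ _ω ∈ T, A ^ e) * ∏ _ω ∈ univ \ T, B ^ e := by
        refine Finset.sum_congr rfl fun T _ => ?_
        rw [Finset.prod_const, Finset.prod_const]
    _ = ∏ _ω : Fin s → Bool, (A ^ e + B ^ e) := (Finset.prod_add _ _ _).symm
    _ = (A ^ e + B ^ e) ^ n := by
        rw [Finset.prod_const, card_univ_bool]

lemma boxInner_diag_eq (u : Fin s → Fin d → ℤ) (f : (Fin d → ZMod N) → ℝ) :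
    boxInner N d s M u (fun _ => f) = SB' M u (fun _ => f) / ((N:ℝ)^d * (M:ℝ)^(2*s)) := rfl

lemma DPos (hM : 1 ≤ M) : (0:ℝ) < (N:ℝ)^d * (M:ℝ)^(2*s) := by
  have h1 : (0:ℝ) < N := by exact_mod_cast Nat.pos_of_ne_zero (NeZero.ne N)
  have h2 : (0:ℝ) < M := by exact_mod_cast hM
  positivity

lemma exp_mul (hs : 1 ≤ s) : ((1:ℝ)/2^s) * ((2^s : ℕ) : ℝ) = 1 := by
  have : ((2^s : ℕ) : ℝ) = (2:ℝ)^s := by push_cast; ring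
  rw [this]
  field_simp

lemma rpow_pow_cancel {x : ℝ} (hx : 0 ≤ x) (hs : 1 ≤ s) :
    (x ^ ((1:ℝ)/2^s)) ^ (2^s : ℕ) = x := by
  rw [← Real.rpow_natCast (x ^ ((1:ℝ)/2^s)) (2^s), ← Real.rpow_mul hx, exp_mul hs,
    Real.rpow_one]

lemma pow_rpow_cancel {x : ℝ} (hx : 0 ≤ x) (hs : 1 ≤ s) :
    (x ^ (2^s : ℕ)) ^ ((1:ℝ)/2^s) = x := by
  rw [← Real.rpow_natCast x (2^s), ← Real.rpow_mul hx, mul_comm, exp_mul hs, Real.rpow_one]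

lemma boxNorm_nonneg (hM : 1 ≤ M) (hs : 1 ≤ s) (u : Fin s → Fin d → ℤ)
    (f : (Fin d → ZMod N) → ℝ) : 0 ≤ boxNorm N d s M u f := by
  rw [boxNorm, boxInner_diag_eq]
  exact Real.rpow_nonneg (div_nonneg (SB_diag_nonneg hM hs u f) (DPos hM).le) _

lemma boxNorm_add_le (hM : 1 ≤ M) (hs : 1 ≤ s) (u : Fin s → Fin d → ℤ)
    (f g : (Fin d → ZMod N) → ℝ) :
    boxNorm N d s M u (f + g) ≤ boxNorm N d s M u f + boxNorm N d s M u g := by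
  have hDpos := DPos (N := N) (d := d) (s := s) (M := M) hM
  set D := (N:ℝ)^d * (M:ℝ)^(2*s) with hDdef
  set e : ℝ := (1:ℝ)/2^s with hedef
  have he0 : 0 ≤ e := by rw [hedef]; positivity
  set A := SB' M u (fun _ => f) with hAdef
  set B := SB' M u (fun _ => g) with hBdef
  have hA : 0 ≤ A := SB_diag_nonneg hM hs u f
  have hB : 0 ≤ B := SB_diag_nonneg hM hs u g
  have hC : 0 ≤ SB' M u (fun _ => f + g) := SB_diag_nonneg hM hs u (f + g)
  have hαβ : 0 ≤ A ^ e + B ^ e := add_nonneg (Real.rpow_nonneg hA e) (Real.rpow_nonneg hB e)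
  have key := SB_add_le hM hs u f g
  calc boxNorm N d s M u (f + g) = (SB' M u (fun _ => f + g) / D) ^ e := rfl
    _ ≤ (((A ^ e + B ^ e) ^ (2^s : ℕ)) / D) ^ e := by
        refine Real.rpow_le_rpow (div_nonneg hC hDpos.le) ?_ he0
        exact div_le_div_of_nonneg_right key hDpos.le
    _ = ((A ^ e + B ^ e) ^ (2^s : ℕ)) ^ e / D ^ e :=
        Real.div_rpow (pow_nonneg hαβ _) hDpos.le e
    _ = (A ^ e + B ^ e) / D ^ e := by rw [pow_rpow_cancel hαβ hs]
    _ = A ^ e / D ^ e + B ^ e / D ^ e := add_div _ _ _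
    _ = boxNorm N d s M u f + boxNorm N d s M u g := by
        rw [show boxNorm N d s M u f = (A / D) ^ e from rfl,
          show boxNorm N d s M u g = (B / D) ^ e from rfl,
          Real.div_rpow hA hDpos.le e, Real.div_rpow hB hDpos.le e]
end aux

/-- The averaged local box norm satisfies the triangle inequality. -/
theorem avg_local_box_norm_triangle
    (N M H d s t : ℕ) [NeZero N] (hM : 1 ≤ M) (hH : 1 ≤ H)
    (hd : 1 ≤ d) (hs : 1 ≤ s) (ht : 1 ≤ t)
    (Q : Fin s → (Fin t → ℤ) → Fin d → ℤ) (f g : (Fin d → ZMod N) → ℝ) :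
    avgBoxNorm N d s t M H Q (f + g) ≤
      avgBoxNorm N d s t M H Q f + avgBoxNorm N d s t M H Q g := by
  set PH := Fintype.piFinset (fun _ : Fin t => Finset.Icc (1 : ℤ) (H : ℤ)) with hPH
  set e : ℝ := (1:ℝ)/2^s with hedef
  have he0 : 0 ≤ e := by rw [hedef]; positivity
  set n : ℕ := 2^s with hndef
  have hne : (n:ℝ) = (2:ℝ)^s := by push_cast [hndef]; ring
  have hen : e = 1/(n:ℝ) := by rw [hedef, hne]
  have hn1 : (1:ℝ) ≤ (n:ℝ) := by
    have : 1 ≤ n := Nat.one_le_two_pow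
    exact_mod_cast this
  set a : (Fin t → ℤ) → ℝ := fun h => boxNorm N d s M (fun j => Q j h) f with hadef
  set b : (Fin t → ℤ) → ℝ := fun h => boxNorm N d s M (fun j => Q j h) g with hbdef
  set c : (Fin t → ℤ) → ℝ := fun h => boxNorm N d s M (fun j => Q j h) (f + g) with hcdef
  have ha : ∀ h, 0 ≤ a h := fun h => boxNorm_nonneg hM hs _ f
  have hb : ∀ h, 0 ≤ b h := fun h => boxNorm_nonneg hM hs _ g
  have hc : ∀ h, 0 ≤ c h := fun h => boxNorm_nonneg hM hs _ (f + g)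
  have htri : ∀ h, c h ≤ a h + b h := fun h => boxNorm_add_le hM hs _ f g
  have hHt : (0:ℝ) < (H:ℝ)^t := by
    have : (0:ℝ) < H := by exact_mod_cast hH
    positivity
  have step1 : ∑ h ∈ PH, c h ^ n ≤ ∑ h ∈ PH, (a h + b h) ^ n :=
    Finset.sum_le_sum fun h _ => pow_le_pow_left₀ (hc h) (htri h) n
  have mink := Real.Lp_add_le_of_nonneg (s := PH) (f := a) (g := b) (p := (n:ℝ))
    hn1 (fun h _ => ha h) (fun h _ => hb h)
  simp only [Real.rpow_natCast] at mink
  have mink' : (∑ h ∈ PH, (a h + b h) ^ n) ^ e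
      ≤ (∑ h ∈ PH, a h ^ n) ^ e + (∑ h ∈ PH, b h ^ n) ^ e := by
    rw [hen]
    convert mink using 3 <;> rw [← Real.rpow_natCast]
  have hsum_ab : 0 ≤ ∑ h ∈ PH, (a h + b h) ^ n :=
    Finset.sum_nonneg fun h _ => pow_nonneg (add_nonneg (ha h) (hb h)) n
  have hsum_c : 0 ≤ ∑ h ∈ PH, c h ^ n :=
    Finset.sum_nonneg fun h _ => pow_nonneg (hc h) n
  have hsum_a : 0 ≤ ∑ h ∈ PH, a h ^ n :=
    Finset.sum_nonneg fun h _ => pow_nonneg (ha h) n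
  have hsum_b : 0 ≤ ∑ h ∈ PH, b h ^ n :=
    Finset.sum_nonneg fun h _ => pow_nonneg (hb h) n
  calc avgBoxNorm N d s t M H Q (f + g)
      = ((∑ h ∈ PH, c h ^ n) / (H:ℝ)^t) ^ e := rfl
    _ ≤ ((∑ h ∈ PH, (a h + b h) ^ n) / (H:ℝ)^t) ^ e := by
        refine Real.rpow_le_rpow (div_nonneg hsum_c hHt.le) ?_ he0
        exact div_le_div_of_nonneg_right step1 hHt.le
    _ = (∑ h ∈ PH, (a h + b h) ^ n) ^ e / ((H:ℝ)^t) ^ e :=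
        Real.div_rpow hsum_ab hHt.le e
    _ ≤ ((∑ h ∈ PH, a h ^ n) ^ e + (∑ h ∈ PH, b h ^ n) ^ e) / ((H:ℝ)^t) ^ e := by
        exact div_le_div_of_nonneg_right mink' (Real.rpow_nonneg hHt.le e)
    _ = (∑ h ∈ PH, a h ^ n) ^ e / ((H:ℝ)^t) ^ e + (∑ h ∈ PH, b h ^ n) ^ e / ((H:ℝ)^t) ^ e :=
        add_div _ _ _
    _ = avgBoxNorm N d s t M H Q f + avgBoxNorm N d s t M H Q g := by
        rw [show avgBoxNorm N d s t M H Q f = ((∑ h ∈ PH, a h ^ n) / (H:ℝ)^t) ^ e from rfl,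
          show avgBoxNorm N d s t M H Q g = ((∑ h ∈ PH, b h ^ n) / (H:ℝ)^t) ^ e from rfl,
          Real.div_rpow hsum_a hHt.le e, Real.div_rpow hsum_b hHt.le e]
end
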